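/- Let A_1,...,A_d be N×N complex matrices, σ_1,...,σ_d ∈ ℂ, and define the dN×dN matrix L̃(τ,ξ) whose (j,k) block is ξ_j A_j + δ_{jk}(τ + σ_j) I_N. Then det L̃(τ,ξ) = det L_1( ∏_{j=1}^d (τ+σ_j), ξ_1 ∏_{j≠1}(τ+σ_j), ..., ξ_d ∏_{j≠d}(τ+σ_j) ), where L_1(s, η) = s I_N + Σ_l η_l A_l, provided all τ + σ_j ≠ 0. (By polynomial identity this extends to all τ.) -/

import Mathlib

open Matrix

/-- Determinant identity for the Bérenger split symbol with absorptions: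
`det L̃(τ,ξ) = det L₁(∏(τ+σⱼ), ξ₁∏_{j≠1}(τ+σⱼ), …, ξ_d∏_{j≠d}(τ+σⱼ))`,
where `L₁(s,η) = sI + Σ ηₗ Aₗ`, provided each `τ + σⱼ ≠ 0`. -/
theorem berenger_split_det_absorption (N d : ℕ)
    (A : Fin d → Matrix (Fin N) (Fin N) ℂ)
    (σ : Fin d → ℂ) (τ : ℂ) (ξ : Fin d → ℂ)
    (hτσ : ∀ j, τ + σ j ≠ 0) :
    Matrix.det (Matrix.of fun p q : Fin d × Fin N =>
        ξ p.1 * A p.1 p.2 q.2 + if p = q then τ + σ p.1 else 0)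
      = Matrix.det ((∏ j, (τ + σ j)) • (1 : Matrix (Fin N) (Fin N) ℂ)
          + ∑ l, (ξ l * ∏ j ∈ Finset.univ.erase l, (τ + σ j)) • A l) := by
  set c : Fin d × Fin N → ℂ := fun p => τ + σ p.1 with hc
  set C : Matrix (Fin d × Fin N) (Fin N) ℂ :=
    Matrix.of (fun p q => ξ p.1 * A p.1 p.2 q) with hC
  set E : Matrix (Fin N) (Fin d × Fin N) ℂ :=
    Matrix.of (fun q p => if q = p.2 then (1 : ℂ) else 0) with hE
  set D : Matrix (Fin d × Fin N) (Fin d × Fin N) ℂ := Matrix.diagonal c with hD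
  set Dinv : Matrix (Fin d × Fin N) (Fin d × Fin N) ℂ :=
    Matrix.diagonal (fun p => (c p)⁻¹) with hDinv
  have hcne : ∀ p, c p ≠ 0 := fun p => hτσ p.1
  have hDDinv : D * Dinv = 1 := by
    rw [hD, hDinv, Matrix.diagonal_mul_diagonal]
    convert Matrix.diagonal_one using 2
    ext p
    exact mul_inv_cancel₀ (hcne p)
  -- LHS matrix equals D + C * E
  have hM : (Matrix.of fun p q : Fin d × Fin N =>
        ξ p.1 * A p.1 p.2 q.2 + if p = q then τ + σ p.1 else 0)
      = D + C * E := by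
    ext p q
    simp only [Matrix.of_apply, Matrix.add_apply, Matrix.mul_apply, hD, hC, hE,
      Matrix.diagonal_apply, mul_ite, mul_one, mul_zero]
    rw [Finset.sum_ite_eq' (Finset.univ : Finset (Fin N)) q.2]
    simp [hc, add_comm]
  -- The small matrix
  have hsmall : E * (Dinv * C) = ∑ l, ((τ + σ l)⁻¹ * ξ l) • A l := by
    ext q q'
    simp only [Matrix.mul_apply, hE, hDinv, hC, Matrix.of_apply,
      Matrix.diagonal_apply, Matrix.sum_apply, Matrix.smul_apply, smul_eq_mul,
      ite_mul, one_mul, zero_mul, mul_ite, mul_zero]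
    rw [Fintype.sum_prod_type]
    congr 1
    ext l
    simp [Finset.sum_ite_eq, hc, mul_assoc]
  have hdet : Matrix.det (D + C * E)
      = Matrix.det D * Matrix.det (1 + E * (Dinv * C)) := by
    have : D + C * E = D * (1 + Dinv * C * E) := by
      rw [Matrix.mul_add, Matrix.mul_one, ← Matrix.mul_assoc, ← Matrix.mul_assoc,
        hDDinv, Matrix.one_mul]
    rw [this, Matrix.det_mul, Matrix.det_one_add_mul_comm (Dinv * C) E]
  have hdetD : Matrix.det D = (∏ j, (τ + σ j)) ^ N := by
    rw [hD, Matrix.det_diagonal, Fintype.prod_prod_type]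
    simp [hc, Finset.prod_pow]
  -- RHS matrix as a scalar multiple
  have hR : (∏ j, (τ + σ j)) • (1 : Matrix (Fin N) (Fin N) ℂ)
          + ∑ l, (ξ l * ∏ j ∈ Finset.univ.erase l, (τ + σ j)) • A l
      = (∏ j, (τ + σ j)) • (1 + ∑ l, ((τ + σ l)⁻¹ * ξ l) • A l) := by
    rw [smul_add, Finset.smul_sum]
    congr 1
    refine Finset.sum_congr rfl fun l _ => ?_
    rw [smul_smul]
    congr 1
    rw [← Finset.mul_prod_erase Finset.univ (fun j => τ + σ j) (Finset.mem_univ l)]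
    have h := hτσ l
    field_simp
  rw [hM, hdet, hsmall, hdetD, hR, Matrix.det_smul]
  simp [mul_comm]
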